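/- Viewing $\Lambda_2$ and $\Lambda_4$ as functions of $\omega$ (with $\alpha$ fixed), the ratio $\Lambda_{24}(\omega) = \Lambda_2(\omega)/\Lambda_4(\omega)$ is differentiable and strictly decreasing: $\frac{d}{d\omega}\Lambda_{24}(\omega) < 0$ for all $\omega$ with $0 \le \beta(\omega) < 1$. -/

import Mathlib

open MeasureTheory Real Filter Set Topology



noncomputable def atnh (x : ℝ) : ℝ := (Real.log (1+x) - Real.log (1-x))/2

lemma atnh_hasDerivAt {x : ℝ} (h1 : -1 < x) (h2 : x < 1) :
    HasDerivAt atnh (1/(1-x^2)) x := by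
  have hp : (0:ℝ) < 1 + x := by linarith
  have hm : (0:ℝ) < 1 - x := by linarith
  have d1 : HasDerivAt (fun y : ℝ => Real.log (1+y)) (1/(1+x)) x := by
    have : HasDerivAt (fun y : ℝ => 1+y) 1 x := (hasDerivAt_id x).const_add 1
    simpa using this.log hp.ne'
  have d2 : HasDerivAt (fun y : ℝ => Real.log (1-y)) (-(1/(1-x))) x := by
    have : HasDerivAt (fun y : ℝ => 1-y) (-1) x := (hasDerivAt_id x).const_sub 1
    have := this.log hm.ne'
    convert this using 1
    field_simp
  have := (d1.sub d2).div_const 2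
  refine this.congr_deriv (Eq.symm ?_)
  have : 1 - x^2 = (1+x)*(1-x) := by ring
  rw [this]
  field_simp
  ring

lemma atnh_zero : atnh 0 = 0 := by simp [atnh]

lemma atnh_lt_self_div {k : ℝ} (h0 : 0 < k) (h1 : k < 1) : atnh k < k/(1-k^2) := by
  set g : ℝ → ℝ := fun x => x/(1-x^2) - atnh x with hg
  have key : StrictMonoOn g (Icc 0 k) := by
    have hderiv : ∀ x ∈ Icc (0:ℝ) k, HasDerivAt g (((1-x^2) + x*(2*x))/(1-x^2)^2 - 1/(1-x^2)) x := by
      intro x hx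
      have hx1 : -1 < x := by linarith [hx.1]
      have hx2 : x < 1 := lt_of_le_of_lt hx.2 h1
      have hne : (1:ℝ) - x^2 ≠ 0 := by nlinarith
      have du : HasDerivAt (fun y : ℝ => y/(1-y^2)) ((1*(1-x^2) - x*(-(2*x)))/(1-x^2)^2) x := by
        have dden : HasDerivAt (fun y : ℝ => 1-y^2) (-(2*x)) x := by
          have := (hasDerivAt_pow 2 x).const_sub 1
          simpa using this
        exact (hasDerivAt_id x).div dden hne
      have := du.sub (atnh_hasDerivAt hx1 hx2)
      refine this.congr_deriv (Eq.symm ?_)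
      ring
    apply strictMonoOn_of_deriv_pos (convex_Icc 0 k)
    · exact fun x hx => (hderiv x hx).continuousAt.continuousWithinAt
    · intro x hx
      rw [interior_Icc] at hx
      rw [(hderiv x ⟨hx.1.le, hx.2.le⟩).deriv]
      have hx2 : x < 1 := lt_of_lt_of_le hx.2 h1.le
      have hpos : 0 < 1 - x^2 := by nlinarith [hx.1]
      rw [div_sub_div _ _ (by positivity) hpos.ne']
      apply div_pos
      · nlinarith [mul_pos (mul_pos hx.1 hx.1) hpos]
      · positivity
  have := key (by constructor <;> [rfl; exact h0.le] : (0:ℝ) ∈ Icc 0 k)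
    (by exact ⟨h0.le, le_rfl⟩) h0
  simp [hg, atnh_zero] at this
  linarith

lemma self_lt_atnh {k : ℝ} (h0 : 0 < k) (h1 : k < 1) : k < atnh k := by
  set g : ℝ → ℝ := fun x => atnh x - x with hg
  have key : StrictMonoOn g (Icc 0 k) := by
    have hderiv : ∀ x ∈ Icc (0:ℝ) k, HasDerivAt g (1/(1-x^2) - 1) x := by
      intro x hx
      have hx1 : -1 < x := by linarith [hx.1]
      have hx2 : x < 1 := lt_of_le_of_lt hx.2 h1
      exact (atnh_hasDerivAt hx1 hx2).sub (hasDerivAt_id x)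
    apply strictMonoOn_of_deriv_pos (convex_Icc 0 k)
    · exact fun x hx => (hderiv x hx).continuousAt.continuousWithinAt
    · intro x hx
      rw [interior_Icc] at hx
      rw [(hderiv x ⟨hx.1.le, hx.2.le⟩).deriv]
      have hx2 : x < 1 := lt_of_lt_of_le hx.2 h1.le
      have hpos : 0 < 1 - x^2 := by nlinarith [hx.1]
      have h1x : 1 - x^2 < 1 := by nlinarith [hx.1]
      rw [sub_pos, lt_div_iff₀ hpos]
      nlinarith
  have := key (by exact ⟨le_rfl, h0.le⟩) (by exact ⟨h0.le, le_rfl⟩) h0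
  simp [hg, atnh_zero] at this
  linarith



lemma integrable_of_even {f : ℝ → ℝ} (hev : ∀ x, f (-x) = f x)
    (h : IntegrableOn f (Ioi 0)) : Integrable f := by
  rw [← integrableOn_univ, ← Set.Iic_union_Ioi (a := (0:ℝ)), integrableOn_union]
  refine ⟨?_, h⟩
  rw [← (Measure.measurePreserving_neg (volume : Measure ℝ)).integrableOn_comp_preimage
      (Homeomorph.neg ℝ).measurableEmbedding]
  simp only [Function.comp_def, hev, neg_preimage, neg_Iic, neg_zero]
  exact (integrableOn_Ici_iff_integrableOn_Ioi).2 h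

section Lam2

variable {ω k : ℝ}

lemma Lam2_eval (hω : 0 < ω) (hk : 0 < k) (hk1 : k < 1) :
    ∫ z : ℝ, 4*ω/(1 + Real.sqrt (1-k^2) * Real.cosh (2*Real.sqrt ω*z))
      = (2*Real.sqrt ω/k)*(Real.log (1+k) - Real.log (1-k)) := by
  set b := Real.sqrt ω with hbdef
  have hb : 0 < b := Real.sqrt_pos.2 hω
  have hb2 : b^2 = ω := Real.sq_sqrt hω.le
  have hkk : (0:ℝ) < 1 - k^2 := by nlinarith
  set a := Real.sqrt (1-k^2) with hadef
  have ha : 0 < a := Real.sqrt_pos.2 hkk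
  have ha2 : a^2 = 1 - k^2 := Real.sq_sqrt hkk.le
  set f : ℝ → ℝ := fun z => 4*ω/(1 + a * Real.cosh (2*b*z)) with hfdef
  set F : ℝ → ℝ := fun z => (2*b/k) *
    (Real.log (a*Real.exp (2*b*z) + 1 - k) - Real.log (a*Real.exp (2*b*z) + 1 + k)) with hFdef
  have hdenpos : ∀ z : ℝ, 0 < 1 + a * Real.cosh (2*b*z) := by
    intro z
    have := Real.cosh_pos (x := 2*b*z)
    positivity
  have hderiv : ∀ z : ℝ, HasDerivAt F (f z) z := by
    intro z
    have hE : 0 < a * Real.exp (2*b*z) := by positivity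
    have h1 : 0 < a*Real.exp (2*b*z) + 1 - k := by linarith
    have h2 : 0 < a*Real.exp (2*b*z) + 1 + k := by linarith
    have dP : HasDerivAt (fun z : ℝ => a*Real.exp (2*b*z)) (2*b*(a*Real.exp (2*b*z))) z := by
      have h0 : HasDerivAt (fun z : ℝ => 2*b*z) (2*b) z := by
        simpa using (hasDerivAt_id z).const_mul (2*b)
      have := (h0.exp).const_mul a
      refine this.congr_deriv (Eq.symm ?_)
      ring
    have d1 : HasDerivAt (fun z : ℝ => Real.log (a*Real.exp (2*b*z) + 1 - k))
        (2*b*(a*Real.exp (2*b*z))/(a*Real.exp (2*b*z) + 1 - k)) z := by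
      have := ((dP.add_const 1).sub_const k).log (by linarith : a*Real.exp (2*b*z) + 1 - k ≠ 0)
      simpa [add_sub_assoc] using this
    have d2 : HasDerivAt (fun z : ℝ => Real.log (a*Real.exp (2*b*z) + 1 + k))
        (2*b*(a*Real.exp (2*b*z))/(a*Real.exp (2*b*z) + 1 + k)) z := by
      have := ((dP.add_const 1).add_const k).log (by linarith : a*Real.exp (2*b*z) + 1 + k ≠ 0)
      simpa [add_assoc] using this
    have := (d1.sub d2).const_mul (2*b/k)
    refine this.congr_deriv (Eq.symm ?_)
    rw [hfdef]
    simp only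
    have he : 0 < Real.exp (2*b*z) := Real.exp_pos _
    have hc : 2*Real.exp (2*b*z)*Real.cosh (2*b*z) = Real.exp (2*b*z)^2 + 1 := by
      have h := Real.exp_add (-(2*b*z)) (2*b*z)
      rw [neg_add_cancel, Real.exp_zero] at h
      rw [Real.cosh_eq]
      linear_combination -h
    have hA : 2*b*(a*Real.exp (2*b*z))/(a*Real.exp (2*b*z)+1-k) - 2*b*(a*Real.exp (2*b*z))/(a*Real.exp (2*b*z)+1+k)
        = 2*b*k/(1 + a*Real.cosh (2*b*z)) := by
      rw [div_sub_div _ _ h1.ne' h2.ne', div_eq_div_iff (mul_pos h1 h2).ne' (hdenpos z).ne']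
      linear_combination (2*a^2*b*k)*hc + (2*b*k)*ha2
    rw [hA, ← hb2]
    field_simp
    norm_num
  have hk1' : (0:ℝ) < 1 - k := by linarith
  have hwtop : Tendsto (fun z : ℝ => Real.exp (-(2*b*z))) atTop (𝓝 0) := by
    apply Real.tendsto_exp_atBot.comp
    have h : Tendsto (fun z : ℝ => 2*b*z) atTop atTop := by
      apply Tendsto.const_mul_atTop (by positivity : (0:ℝ) < 2*b) tendsto_id
    exact tendsto_neg_atBot_iff.mpr h
  have hebot : Tendsto (fun z : ℝ => Real.exp (2*b*z)) atBot (𝓝 0) := by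
    apply Real.tendsto_exp_atBot.comp
    exact Tendsto.const_mul_atBot (by positivity : (0:ℝ) < 2*b) tendsto_id
  have hFtop : Tendsto F atTop (𝓝 0) := by
    have heq : ∀ z : ℝ, F z = (2*b/k)*(Real.log (a + (1-k)*Real.exp (-(2*b*z)))
        - Real.log (a + (1+k)*Real.exp (-(2*b*z)))) := by
      intro z
      have he : (0:ℝ) < Real.exp (2*b*z) := Real.exp_pos _
      have hw : (0:ℝ) < Real.exp (-(2*b*z)) := Real.exp_pos _
      have p1 : (0:ℝ) < a + (1-k)*Real.exp (-(2*b*z)) := by positivity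
      have p2 : (0:ℝ) < a + (1+k)*Real.exp (-(2*b*z)) := by
        have : (0:ℝ) < 1 + k := by linarith
        positivity
      have e1 : a*Real.exp (2*b*z) + 1 - k = Real.exp (2*b*z) * (a + (1-k)*Real.exp (-(2*b*z))) := by
        rw [Real.exp_neg]; field_simp; ring
      have e2 : a*Real.exp (2*b*z) + 1 + k = Real.exp (2*b*z) * (a + (1+k)*Real.exp (-(2*b*z))) := by
        rw [Real.exp_neg]; field_simp; ring
      rw [hFdef]
      simp only
      rw [e1, e2, Real.log_mul he.ne' p1.ne', Real.log_mul he.ne' p2.ne']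
      ring
    rw [funext heq]
    have l1 : Tendsto (fun z : ℝ => Real.log (a + (1-k)*Real.exp (-(2*b*z)))) atTop
        (𝓝 (Real.log a)) := by
      have h : Tendsto (fun z : ℝ => a + (1-k)*Real.exp (-(2*b*z))) atTop (𝓝 (a + (1-k)*0)) :=
        tendsto_const_nhds.add (hwtop.const_mul _)
      have := (Real.continuousAt_log ha.ne').tendsto.comp (by simpa using h)
      simpa [Function.comp_def] using this
    have l2 : Tendsto (fun z : ℝ => Real.log (a + (1+k)*Real.exp (-(2*b*z)))) atTop
        (𝓝 (Real.log a)) := by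
      have h : Tendsto (fun z : ℝ => a + (1+k)*Real.exp (-(2*b*z))) atTop (𝓝 (a + (1+k)*0)) :=
        tendsto_const_nhds.add (hwtop.const_mul _)
      have := (Real.continuousAt_log ha.ne').tendsto.comp (by simpa using h)
      simpa [Function.comp_def] using this
    have := (l1.sub l2).const_mul (2*b/k)
    simpa using this
  have hFbot : Tendsto F atBot (𝓝 ((2*b/k)*(Real.log (1-k) - Real.log (1+k)))) := by
    have hE : Tendsto (fun z : ℝ => a*Real.exp (2*b*z)) atBot (𝓝 0) := by
      simpa using hebot.const_mul a
    have l1 : Tendsto (fun z : ℝ => Real.log (a*Real.exp (2*b*z) + 1 - k)) atBot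
        (𝓝 (Real.log (1-k))) := by
      have h : Tendsto (fun z : ℝ => a*Real.exp (2*b*z) + 1 - k) atBot (𝓝 (0 + 1 - k)) :=
        (hE.add_const 1).sub_const k
      have := (Real.continuousAt_log (by linarith : (1:ℝ)-k ≠ 0)).tendsto.comp
        (by simpa [zero_add] using h)
      simpa [Function.comp_def] using this
    have l2 : Tendsto (fun z : ℝ => Real.log (a*Real.exp (2*b*z) + 1 + k)) atBot
        (𝓝 (Real.log (1+k))) := by
      have h : Tendsto (fun z : ℝ => a*Real.exp (2*b*z) + 1 + k) atBot (𝓝 (0 + 1 + k)) :=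
        (hE.add_const 1).add_const k
      have := (Real.continuousAt_log (by linarith : (1:ℝ)+k ≠ 0)).tendsto.comp
        (by simpa [zero_add] using h)
      simpa [Function.comp_def] using this
    exact (l1.sub l2).const_mul (2*b/k)
  have hfnonneg : ∀ z : ℝ, 0 ≤ f z := by
    intro z
    rw [hfdef]
    have := hdenpos z
    positivity
  have hint : Integrable f := by
    apply integrable_of_even
    · intro z
      rw [hfdef]
      simp only
      rw [mul_neg, Real.cosh_neg]
    · exact integrableOn_Ioi_deriv_of_nonneg' (fun x _ => hderiv x)
        (fun x _ => hfnonneg x) hFtop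
  have := integral_of_hasDerivAt_of_tendsto hderiv hint hFbot hFtop
  rw [this]
  ring

end Lam2



lemma integrable_of_even4 {f : ℝ → ℝ} (hev : ∀ x, f (-x) = f x)
    (h : MeasureTheory.IntegrableOn f (Set.Ioi 0)) : MeasureTheory.Integrable f := by
  rw [← MeasureTheory.integrableOn_univ, ← Set.Iic_union_Ioi (a := (0:ℝ)),
    MeasureTheory.integrableOn_union]
  refine ⟨?_, h⟩
  rw [← (MeasureTheory.Measure.measurePreserving_neg
      (MeasureTheory.volume : MeasureTheory.Measure ℝ)).integrableOn_comp_preimage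
      (Homeomorph.neg ℝ).measurableEmbedding]
  simp only [Function.comp_def, hev, Set.neg_preimage, Set.neg_Iic, neg_zero]
  exact (integrableOn_Ici_iff_integrableOn_Ioi).2 h

section Lam4

variable {ω k : ℝ}

lemma Lam4_eval (hω : 0 < ω) (hk : 0 < k) (hk1 : k < 1) :
    ∫ z : ℝ, (4*ω/(1 + Real.sqrt (1-k^2) * Real.cosh (2*Real.sqrt ω*z)))^2
      = (16*(Real.sqrt ω)^3/k^3)*((Real.log (1+k) - Real.log (1-k))/2 - k) := by
  set b := Real.sqrt ω with hbdef
  have hb : 0 < b := Real.sqrt_pos.2 hω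
  have hb2 : b^2 = ω := Real.sq_sqrt hω.le
  have hkk : (0:ℝ) < 1 - k^2 := by nlinarith
  have hk1' : (0:ℝ) < 1 - k := by linarith
  set a := Real.sqrt (1-k^2) with hadef
  have ha : 0 < a := Real.sqrt_pos.2 hkk
  have ha2 : a^2 = 1 - k^2 := Real.sq_sqrt hkk.le
  set f : ℝ → ℝ := fun z => (4*ω/(1 + a * Real.cosh (2*b*z)))^2 with hfdef
  set F : ℝ → ℝ := fun z => (8*b^3/k^2) *
    ((1/k) * (Real.log (a*Real.exp (2*b*z) + 1 - k) - Real.log (a*Real.exp (2*b*z) + 1 + k))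
      - a*Real.sinh (2*b*z)/(1 + a*Real.cosh (2*b*z))) with hFdef
  have hdenpos : ∀ z : ℝ, 0 < 1 + a * Real.cosh (2*b*z) := by
    intro z
    have := Real.cosh_pos (x := 2*b*z)
    positivity
  have hderiv : ∀ z : ℝ, HasDerivAt F (f z) z := by
    intro z
    have hE : 0 < a * Real.exp (2*b*z) := by positivity
    have h1 : 0 < a*Real.exp (2*b*z) + 1 - k := by linarith
    have h2 : 0 < a*Real.exp (2*b*z) + 1 + k := by linarith
    have h0 : HasDerivAt (fun z : ℝ => 2*b*z) (2*b) z := by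
      simpa using (hasDerivAt_id z).const_mul (2*b)
    have dP : HasDerivAt (fun z : ℝ => a*Real.exp (2*b*z)) (2*b*(a*Real.exp (2*b*z))) z := by
      have := (h0.exp).const_mul a
      refine this.congr_deriv (Eq.symm ?_)
      ring
    have d1 : HasDerivAt (fun z : ℝ => Real.log (a*Real.exp (2*b*z) + 1 - k))
        (2*b*(a*Real.exp (2*b*z))/(a*Real.exp (2*b*z) + 1 - k)) z := by
      have := ((dP.add_const 1).sub_const k).log (by linarith : a*Real.exp (2*b*z) + 1 - k ≠ 0)
      simpa [add_sub_assoc] using this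
    have d2 : HasDerivAt (fun z : ℝ => Real.log (a*Real.exp (2*b*z) + 1 + k))
        (2*b*(a*Real.exp (2*b*z))/(a*Real.exp (2*b*z) + 1 + k)) z := by
      have := ((dP.add_const 1).add_const k).log (by linarith : a*Real.exp (2*b*z) + 1 + k ≠ 0)
      simpa [add_assoc] using this
    have dnum : HasDerivAt (fun z : ℝ => a*Real.sinh (2*b*z)) (a*(Real.cosh (2*b*z)*(2*b))) z :=
      ((Real.hasDerivAt_sinh (2*b*z)).comp z h0).const_mul a
    have dden : HasDerivAt (fun z : ℝ => 1 + a*Real.cosh (2*b*z)) (a*(Real.sinh (2*b*z)*(2*b))) z :=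
      (((Real.hasDerivAt_cosh (2*b*z)).comp z h0).const_mul a).const_add 1
    have dq : HasDerivAt (fun z : ℝ => a*Real.sinh (2*b*z)/(1 + a*Real.cosh (2*b*z)))
        ((a*(Real.cosh (2*b*z)*(2*b))*(1 + a*Real.cosh (2*b*z))
          - a*Real.sinh (2*b*z)*(a*(Real.sinh (2*b*z)*(2*b))))/(1 + a*Real.cosh (2*b*z))^2) z :=
      dnum.div dden (hdenpos z).ne'
    have := (((d1.sub d2).const_mul (1/k)).sub dq).const_mul (8*b^3/k^2)
    refine this.congr_deriv (Eq.symm ?_)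
    rw [hfdef]
    simp only
    have he : 0 < Real.exp (2*b*z) := Real.exp_pos _
    have hc : 2*Real.exp (2*b*z)*Real.cosh (2*b*z) = Real.exp (2*b*z)^2 + 1 := by
      have h := Real.exp_add (-(2*b*z)) (2*b*z)
      rw [neg_add_cancel, Real.exp_zero] at h
      rw [Real.cosh_eq]
      linear_combination -h
    have hA : 2*b*(a*Real.exp (2*b*z))/(a*Real.exp (2*b*z)+1-k) - 2*b*(a*Real.exp (2*b*z))/(a*Real.exp (2*b*z)+1+k)
        = 2*b*k/(1 + a*Real.cosh (2*b*z)) := by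
      rw [div_sub_div _ _ h1.ne' h2.ne', div_eq_div_iff (mul_pos h1 h2).ne' (hdenpos z).ne']
      linear_combination (2*a^2*b*k)*hc + (2*b*k)*ha2
    have hid := Real.cosh_sq_sub_sinh_sq (2*b*z)
    have hB : (a*(Real.cosh (2*b*z)*(2*b))*(1 + a*Real.cosh (2*b*z))
        - a*Real.sinh (2*b*z)*(a*(Real.sinh (2*b*z)*(2*b))))/(1 + a*Real.cosh (2*b*z))^2
        = (2*a*b*Real.cosh (2*b*z) + 2*b*(1-k^2))/(1 + a*Real.cosh (2*b*z))^2 := by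
      congr 1
      linear_combination (2*a^2*b)*hid + (2*b)*ha2
    rw [hA, hB, ← hb2]
    field_simp
    ring
  have hwtop : Tendsto (fun z : ℝ => Real.exp (-(2*b*z))) atTop (𝓝 0) := by
    apply Real.tendsto_exp_atBot.comp
    have h : Tendsto (fun z : ℝ => 2*b*z) atTop atTop := by
      apply Tendsto.const_mul_atTop (by positivity : (0:ℝ) < 2*b) tendsto_id
    exact tendsto_neg_atBot_iff.mpr h
  have hebot : Tendsto (fun z : ℝ => Real.exp (2*b*z)) atBot (𝓝 0) := by
    apply Real.tendsto_exp_atBot.comp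
    exact Tendsto.const_mul_atBot (by positivity : (0:ℝ) < 2*b) tendsto_id
  have hGtop : Tendsto (fun z : ℝ => Real.log (a*Real.exp (2*b*z) + 1 - k)
      - Real.log (a*Real.exp (2*b*z) + 1 + k)) atTop (𝓝 0) := by
    have heq : ∀ z : ℝ, Real.log (a*Real.exp (2*b*z) + 1 - k)
        - Real.log (a*Real.exp (2*b*z) + 1 + k)
        = Real.log (a + (1-k)*Real.exp (-(2*b*z))) - Real.log (a + (1+k)*Real.exp (-(2*b*z))) := by
      intro z
      have he : (0:ℝ) < Real.exp (2*b*z) := Real.exp_pos _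
      have hw : (0:ℝ) < Real.exp (-(2*b*z)) := Real.exp_pos _
      have p1 : (0:ℝ) < a + (1-k)*Real.exp (-(2*b*z)) := by positivity
      have p2 : (0:ℝ) < a + (1+k)*Real.exp (-(2*b*z)) := by
        have : (0:ℝ) < 1 + k := by linarith
        positivity
      have e1 : a*Real.exp (2*b*z) + 1 - k = Real.exp (2*b*z) * (a + (1-k)*Real.exp (-(2*b*z))) := by
        rw [Real.exp_neg]; field_simp; ring
      have e2 : a*Real.exp (2*b*z) + 1 + k = Real.exp (2*b*z) * (a + (1+k)*Real.exp (-(2*b*z))) := by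
        rw [Real.exp_neg]; field_simp; ring
      rw [e1, e2, Real.log_mul he.ne' p1.ne', Real.log_mul he.ne' p2.ne']
      ring
    rw [funext heq]
    have l1 : Tendsto (fun z : ℝ => Real.log (a + (1-k)*Real.exp (-(2*b*z)))) atTop
        (𝓝 (Real.log a)) := by
      have h : Tendsto (fun z : ℝ => a + (1-k)*Real.exp (-(2*b*z))) atTop (𝓝 (a + (1-k)*0)) :=
        tendsto_const_nhds.add (hwtop.const_mul _)
      have := (Real.continuousAt_log ha.ne').tendsto.comp (by simpa using h)
      simpa [Function.comp_def] using this
    have l2 : Tendsto (fun z : ℝ => Real.log (a + (1+k)*Real.exp (-(2*b*z)))) atTop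
        (𝓝 (Real.log a)) := by
      have h : Tendsto (fun z : ℝ => a + (1+k)*Real.exp (-(2*b*z))) atTop (𝓝 (a + (1+k)*0)) :=
        tendsto_const_nhds.add (hwtop.const_mul _)
      have := (Real.continuousAt_log ha.ne').tendsto.comp (by simpa using h)
      simpa [Function.comp_def] using this
    simpa using l1.sub l2
  have hStop : Tendsto (fun z : ℝ => a*Real.sinh (2*b*z)/(1 + a*Real.cosh (2*b*z))) atTop
      (𝓝 1) := by
    have heq : ∀ z : ℝ, a*Real.sinh (2*b*z)/(1 + a*Real.cosh (2*b*z))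
        = (a - a*(Real.exp (-(2*b*z)))^2)
          /(2*Real.exp (-(2*b*z)) + a + a*(Real.exp (-(2*b*z)))^2) := by
      intro z
      have he : (0:ℝ) < Real.exp (2*b*z) := Real.exp_pos _
      have hd := hdenpos z
      rw [Real.sinh_eq, Real.cosh_eq, Real.exp_neg]
      rw [Real.cosh_eq, Real.exp_neg] at hd
      field_simp
      ring
    rw [funext heq]
    have hnum : Tendsto (fun z : ℝ => a - a*(Real.exp (-(2*b*z)))^2) atTop (𝓝 (a - a*0)) := by
      apply tendsto_const_nhds.sub
      have : Tendsto (fun z : ℝ => (Real.exp (-(2*b*z)))^2) atTop (𝓝 0) := by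
        have := hwtop.mul hwtop
        simpa [pow_two] using this
      simpa using this.const_mul a
    have hden : Tendsto (fun z : ℝ => 2*Real.exp (-(2*b*z)) + a + a*(Real.exp (-(2*b*z)))^2)
        atTop (𝓝 (2*0 + a + a*0)) := by
      apply Tendsto.add
      apply Tendsto.add
      · exact hwtop.const_mul 2
      · exact tendsto_const_nhds
      · have : Tendsto (fun z : ℝ => (Real.exp (-(2*b*z)))^2) atTop (𝓝 0) := by
          have := hwtop.mul hwtop
          simpa [pow_two] using this
        simpa using this.const_mul a
    have := hnum.div hden (by simpa using ha.ne')
    simpa [div_self ha.ne', Pi.div_def] using this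
  have hSbot : Tendsto (fun z : ℝ => a*Real.sinh (2*b*z)/(1 + a*Real.cosh (2*b*z))) atBot
      (𝓝 (-1)) := by
    have heq : ∀ z : ℝ, a*Real.sinh (2*b*z)/(1 + a*Real.cosh (2*b*z))
        = (a*(Real.exp (2*b*z))^2 - a)
          /(2*Real.exp (2*b*z) + a*(Real.exp (2*b*z))^2 + a) := by
      intro z
      have he : (0:ℝ) < Real.exp (2*b*z) := Real.exp_pos _
      have hd := hdenpos z
      rw [Real.sinh_eq, Real.cosh_eq, Real.exp_neg]
      rw [Real.cosh_eq, Real.exp_neg] at hd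
      field_simp
      ring
    rw [funext heq]
    have he2 : Tendsto (fun z : ℝ => (Real.exp (2*b*z))^2) atBot (𝓝 0) := by
      have := hebot.mul hebot
      simpa [pow_two] using this
    have hnum : Tendsto (fun z : ℝ => a*(Real.exp (2*b*z))^2 - a) atBot (𝓝 (a*0 - a)) :=
      (he2.const_mul a).sub_const a
    have hden : Tendsto (fun z : ℝ => 2*Real.exp (2*b*z) + a*(Real.exp (2*b*z))^2 + a)
        atBot (𝓝 (2*0 + a*0 + a)) :=
      (((hebot.const_mul 2).add (he2.const_mul a)).add_const a)
    have := hnum.div hden (by simpa using ha.ne')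
    have heval : (a*0 - a)/(2*0 + a*0 + a) = -1 := by
      field_simp
      ring
    rw [heval] at this
    exact this
  have hGbot : Tendsto (fun z : ℝ => Real.log (a*Real.exp (2*b*z) + 1 - k)
      - Real.log (a*Real.exp (2*b*z) + 1 + k)) atBot
      (𝓝 (Real.log (1-k) - Real.log (1+k))) := by
    have hE : Tendsto (fun z : ℝ => a*Real.exp (2*b*z)) atBot (𝓝 0) := by
      simpa using hebot.const_mul a
    have l1 : Tendsto (fun z : ℝ => Real.log (a*Real.exp (2*b*z) + 1 - k)) atBot
        (𝓝 (Real.log (1-k))) := by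
      have h : Tendsto (fun z : ℝ => a*Real.exp (2*b*z) + 1 - k) atBot (𝓝 (0 + 1 - k)) :=
        (hE.add_const 1).sub_const k
      have := (Real.continuousAt_log (by linarith : (1:ℝ)-k ≠ 0)).tendsto.comp
        (by simpa [zero_add] using h)
      simpa [Function.comp_def] using this
    have l2 : Tendsto (fun z : ℝ => Real.log (a*Real.exp (2*b*z) + 1 + k)) atBot
        (𝓝 (Real.log (1+k))) := by
      have h : Tendsto (fun z : ℝ => a*Real.exp (2*b*z) + 1 + k) atBot (𝓝 (0 + 1 + k)) :=
        (hE.add_const 1).add_const k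
      have := (Real.continuousAt_log (by linarith : (1:ℝ)+k ≠ 0)).tendsto.comp
        (by simpa [zero_add] using h)
      simpa [Function.comp_def] using this
    exact l1.sub l2
  have hFtop : Tendsto F atTop (𝓝 ((8*b^3/k^2) * ((1/k)*0 - 1))) := by
    exact ((hGtop.const_mul (1/k)).sub hStop).const_mul (8*b^3/k^2)
  have hFbot : Tendsto F atBot
      (𝓝 ((8*b^3/k^2) * ((1/k)*(Real.log (1-k) - Real.log (1+k)) - (-1)))) := by
    exact ((hGbot.const_mul (1/k)).sub hSbot).const_mul (8*b^3/k^2)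
  have hfnonneg : ∀ z : ℝ, 0 ≤ f z := by
    intro z
    rw [hfdef]
    positivity
  have hint : Integrable f := by
    apply integrable_of_even4
    · intro z
      rw [hfdef]
      simp only
      rw [mul_neg, Real.cosh_neg]
    · exact integrableOn_Ioi_deriv_of_nonneg' (fun x _ => hderiv x)
        (fun x _ => hfnonneg x) hFtop
  have := integral_of_hasDerivAt_of_tendsto hderiv hint hFbot hFtop
  rw [this]
  field_simp
  ring

end Lam4



lemma integrable_of_even' {f : ℝ → ℝ} (hev : ∀ x, f (-x) = f x)
    (h : IntegrableOn f (Ioi 0)) : Integrable f := by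
  rw [← integrableOn_univ, ← Set.Iic_union_Ioi (a := (0:ℝ)), integrableOn_union]
  refine ⟨?_, h⟩
  rw [← (Measure.measurePreserving_neg (volume : Measure ℝ)).integrableOn_comp_preimage
      (Homeomorph.neg ℝ).measurableEmbedding]
  simp only [Function.comp_def, hev, neg_preimage, neg_Iic, neg_zero]
  exact (integrableOn_Ici_iff_integrableOn_Ioi).2 h

section zerocase

variable {ω : ℝ}

lemma tanh_like_deriv (b : ℝ) (z : ℝ) :
    HasDerivAt (fun z : ℝ => Real.sinh (2*b*z)/(1 + Real.cosh (2*b*z)))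
      (2*b/(1 + Real.cosh (2*b*z))) z := by
  have hd : (0:ℝ) < 1 + Real.cosh (2*b*z) := by
    have := Real.cosh_pos (x := 2*b*z)
    linarith
  have h0 : HasDerivAt (fun z : ℝ => 2*b*z) (2*b) z := by
    simpa using (hasDerivAt_id z).const_mul (2*b)
  have hsh : HasDerivAt (fun z : ℝ => Real.sinh (2*b*z)) (Real.cosh (2*b*z)*(2*b)) z :=
    (Real.hasDerivAt_sinh (2*b*z)).comp z h0
  have hch : HasDerivAt (fun z : ℝ => 1 + Real.cosh (2*b*z)) (Real.sinh (2*b*z)*(2*b)) z :=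
    ((Real.hasDerivAt_cosh (2*b*z)).comp z h0).const_add 1
  have := hsh.div hch hd.ne'
  refine this.congr_deriv (Eq.symm ?_)
  have hid := Real.cosh_sq_sub_sinh_sq (2*b*z)
  field_simp
  linear_combination (-b) * hid

lemma tanh_like_top {b : ℝ} (hb : 0 < b) :
    Tendsto (fun z : ℝ => Real.sinh (2*b*z)/(1 + Real.cosh (2*b*z))) atTop (𝓝 1) := by
  have hwtop : Tendsto (fun z : ℝ => Real.exp (-(2*b*z))) atTop (𝓝 0) := by
    apply Real.tendsto_exp_atBot.comp
    exact tendsto_neg_atBot_iff.mpr (Tendsto.const_mul_atTop (by positivity : (0:ℝ) < 2*b) tendsto_id)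
  have heq : ∀ z : ℝ, Real.sinh (2*b*z)/(1 + Real.cosh (2*b*z))
      = (1 - (Real.exp (-(2*b*z)))^2)
        /(2*Real.exp (-(2*b*z)) + 1 + (Real.exp (-(2*b*z)))^2) := by
    intro z
    have he : (0:ℝ) < Real.exp (2*b*z) := Real.exp_pos _
    have hd : (0:ℝ) < 1 + Real.cosh (2*b*z) := by
      have := Real.cosh_pos (x := 2*b*z); linarith
    rw [Real.sinh_eq, Real.cosh_eq, Real.exp_neg]
    rw [Real.cosh_eq, Real.exp_neg] at hd
    field_simp
    ring
  rw [funext heq]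
  have hw2 : Tendsto (fun z : ℝ => (Real.exp (-(2*b*z)))^2) atTop (𝓝 0) := by
    have := hwtop.mul hwtop
    simpa [pow_two] using this
  have hnum : Tendsto (fun z : ℝ => 1 - (Real.exp (-(2*b*z)))^2) atTop (𝓝 (1 - 0)) :=
    tendsto_const_nhds.sub hw2
  have hden : Tendsto (fun z : ℝ => 2*Real.exp (-(2*b*z)) + 1 + (Real.exp (-(2*b*z)))^2)
      atTop (𝓝 (2*0 + 1 + 0)) :=
    ((hwtop.const_mul 2).add tendsto_const_nhds).add hw2
  have := hnum.div hden (by norm_num)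
  simpa [Pi.div_def] using this

lemma tanh_like_bot {b : ℝ} (hb : 0 < b) :
    Tendsto (fun z : ℝ => Real.sinh (2*b*z)/(1 + Real.cosh (2*b*z))) atBot (𝓝 (-1)) := by
  have hebot : Tendsto (fun z : ℝ => Real.exp (2*b*z)) atBot (𝓝 0) := by
    apply Real.tendsto_exp_atBot.comp
    exact Tendsto.const_mul_atBot (by positivity : (0:ℝ) < 2*b) tendsto_id
  have heq : ∀ z : ℝ, Real.sinh (2*b*z)/(1 + Real.cosh (2*b*z))
      = ((Real.exp (2*b*z))^2 - 1)
        /(2*Real.exp (2*b*z) + (Real.exp (2*b*z))^2 + 1) := by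
    intro z
    have he : (0:ℝ) < Real.exp (2*b*z) := Real.exp_pos _
    have hd : (0:ℝ) < 1 + Real.cosh (2*b*z) := by
      have := Real.cosh_pos (x := 2*b*z); linarith
    rw [Real.sinh_eq, Real.cosh_eq, Real.exp_neg]
    rw [Real.cosh_eq, Real.exp_neg] at hd
    field_simp
    ring
  rw [funext heq]
  have he2 : Tendsto (fun z : ℝ => (Real.exp (2*b*z))^2) atBot (𝓝 0) := by
    have := hebot.mul hebot
    simpa [pow_two] using this
  have hnum : Tendsto (fun z : ℝ => (Real.exp (2*b*z))^2 - 1) atBot (𝓝 (0 - 1)) :=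
    he2.sub_const 1
  have hden : Tendsto (fun z : ℝ => 2*Real.exp (2*b*z) + (Real.exp (2*b*z))^2 + 1)
      atBot (𝓝 (2*0 + 0 + 1)) :=
    ((hebot.const_mul 2).add he2).add_const 1
  have := hnum.div hden (by norm_num)
  simpa [Pi.div_def] using this

lemma Lam2_zero (hω : 0 < ω) :
    ∫ z : ℝ, 4*ω/(1 + Real.cosh (2*Real.sqrt ω*z)) = 4*Real.sqrt ω := by
  set b := Real.sqrt ω with hbdef
  have hb : 0 < b := Real.sqrt_pos.2 hω
  have hb2 : b^2 = ω := Real.sq_sqrt hω.le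
  set f : ℝ → ℝ := fun z => 4*ω/(1 + Real.cosh (2*b*z)) with hfdef
  set F : ℝ → ℝ := fun z => 2*b*(Real.sinh (2*b*z)/(1 + Real.cosh (2*b*z))) with hFdef
  have hdenpos : ∀ z : ℝ, 0 < 1 + Real.cosh (2*b*z) := by
    intro z
    have := Real.cosh_pos (x := 2*b*z); linarith
  have hderiv : ∀ z : ℝ, HasDerivAt F (f z) z := by
    intro z
    have := (tanh_like_deriv b z).const_mul (2*b)
    refine this.congr_deriv (Eq.symm ?_)
    rw [hfdef]
    simp only
    rw [← hb2]
    field_simp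
    ring
  have hFtop : Tendsto F atTop (𝓝 (2*b*1)) := (tanh_like_top hb).const_mul (2*b)
  have hFbot : Tendsto F atBot (𝓝 (2*b*(-1))) := (tanh_like_bot hb).const_mul (2*b)
  have hfnonneg : ∀ z : ℝ, 0 ≤ f z := by
    intro z
    rw [hfdef]
    have := hdenpos z
    positivity
  have hint : Integrable f := by
    apply integrable_of_even'
    · intro z
      rw [hfdef]
      simp only
      rw [mul_neg, Real.cosh_neg]
    · exact integrableOn_Ioi_deriv_of_nonneg' (fun x _ => hderiv x)
        (fun x _ => hfnonneg x) hFtop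
  have := integral_of_hasDerivAt_of_tendsto hderiv hint hFbot hFtop
  rw [this]
  ring

lemma Lam4_zero (hω : 0 < ω) :
    ∫ z : ℝ, (4*ω/(1 + Real.cosh (2*Real.sqrt ω*z)))^2 = 16*(Real.sqrt ω)^3/3 := by
  set b := Real.sqrt ω with hbdef
  have hb : 0 < b := Real.sqrt_pos.2 hω
  have hb2 : b^2 = ω := Real.sq_sqrt hω.le
  set f : ℝ → ℝ := fun z => (4*ω/(1 + Real.cosh (2*b*z)))^2 with hfdef
  set t : ℝ → ℝ := fun z => Real.sinh (2*b*z)/(1 + Real.cosh (2*b*z)) with htdef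
  set F : ℝ → ℝ := fun z => 4*b^3*(t z - (t z)^3/3) with hFdef
  have hdenpos : ∀ z : ℝ, 0 < 1 + Real.cosh (2*b*z) := by
    intro z
    have := Real.cosh_pos (x := 2*b*z); linarith
  have hderiv : ∀ z : ℝ, HasDerivAt F (f z) z := by
    intro z
    have ht := tanh_like_deriv b z
    have h3 : HasDerivAt (fun z : ℝ => (t z)^3/3)
        ((3*(t z)^2*(2*b/(1 + Real.cosh (2*b*z))))/3) z := (ht.pow 3).div_const 3
    have := (ht.sub h3).const_mul (4*b^3)
    refine this.congr_deriv (Eq.symm ?_)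
    rw [hfdef, htdef]
    simp only
    have hd := hdenpos z
    have hid := Real.cosh_sq_sub_sinh_sq (2*b*z)
    rw [← hb2]
    have hS : Real.sinh (2*b*z)^2 = Real.cosh (2*b*z)^2 - 1 := by linear_combination -hid
    rw [div_pow (Real.sinh (2*b*z)), hS]
    field_simp
    ring
  have hFtop : Tendsto F atTop (𝓝 (4*b^3*(1 - 1^3/3))) :=
    (((tanh_like_top hb).sub (((tanh_like_top hb).pow 3).div_const 3)).const_mul (4*b^3))
  have hFbot : Tendsto F atBot (𝓝 (4*b^3*((-1) - (-1)^3/3))) :=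
    (((tanh_like_bot hb).sub (((tanh_like_bot hb).pow 3).div_const 3)).const_mul (4*b^3))
  have hfnonneg : ∀ z : ℝ, 0 ≤ f z := by
    intro z
    rw [hfdef]
    positivity
  have hint : Integrable f := by
    apply integrable_of_even'
    · intro z
      rw [hfdef]
      simp only
      rw [mul_neg, Real.cosh_neg]
    · exact integrableOn_Ioi_deriv_of_nonneg' (fun x _ => hderiv x)
        (fun x _ => hfnonneg x) hFtop
  have := integral_of_hasDerivAt_of_tendsto hderiv hint hFbot hFtop
  rw [this]
  ring

end zerocase




section MainThm

theorem stmt15 (α : ℝ)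
    (R0 : ℝ → ℝ → ℝ)
    (hR0 : ∀ ω z : ℝ, R0 ω z =
      Real.sqrt (4 * ω / (1 + Real.sqrt (1 - (-(16 / 3) * α * ω))
        * Real.cosh (2 * Real.sqrt ω * z))))
    (Λ24 : ℝ → ℝ)
    (hΛ24 : ∀ ω : ℝ, Λ24 ω = (∫ s : ℝ, (R0 ω s) ^ 2) / ∫ s : ℝ, (R0 ω s) ^ 4) :
    ∀ ω : ℝ, 0 < ω → 0 ≤ -(16 / 3) * α * ω → -(16 / 3) * α * ω < 1 →
      DifferentiableAt ℝ Λ24 ω ∧ deriv Λ24 ω < 0 := by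
  intro ω₀ hω₀ hβ0 hβ1
  set c : ℝ := -(16/3) * α with hc
  have hc0 : 0 ≤ c := nonneg_of_mul_nonneg_right (by linarith [hβ0] : 0 ≤ ω₀ * c) hω₀
  -- pointwise rewriting of R0 powers
  have hpt : ∀ ω : ℝ, 0 < ω → 0 ≤ c*ω → (∀ s : ℝ,
      (R0 ω s)^2 = 4*ω/(1 + Real.sqrt (1 - c*ω) * Real.cosh (2*Real.sqrt ω*s))
      ∧ (R0 ω s)^4 = (4*ω/(1 + Real.sqrt (1 - c*ω) * Real.cosh (2*Real.sqrt ω*s)))^2) := by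
    intro ω hω _ s
    have hden : 0 < 1 + Real.sqrt (1 - c*ω) * Real.cosh (2*Real.sqrt ω*s) := by
      have h1 := Real.sqrt_nonneg (1 - c*ω)
      have h2 := Real.cosh_pos (x := 2*Real.sqrt ω*s)
      nlinarith
    have hX : 0 ≤ 4*ω/(1 + Real.sqrt (1 - c*ω) * Real.cosh (2*Real.sqrt ω*s)) :=
      div_nonneg (by linarith) hden.le
    have h2 : (R0 ω s)^2 = 4*ω/(1 + Real.sqrt (1 - c*ω) * Real.cosh (2*Real.sqrt ω*s)) := by
      rw [hR0]
      exact Real.sq_sqrt hX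
    refine ⟨h2, ?_⟩
    have : (R0 ω s)^4 = ((R0 ω s)^2)^2 := by ring
    rw [this, h2]
  rcases eq_or_lt_of_le hc0 with hc00 | hcpos
  · -- c = 0 case : Λ24 ω = 3/(4 ω) near ω₀
    have hEq : ∀ᶠ ω in 𝓝 ω₀, Λ24 ω = 3/(4*ω) := by
      filter_upwards [Ioi_mem_nhds hω₀] with ω hω
      have hω' : (0:ℝ) < ω := hω
      have hpt' := hpt ω hω' (by rw [← hc00]; simp)
      have e2 : (∫ s : ℝ, (R0 ω s)^2) = 4*Real.sqrt ω := by
        rw [show (fun s : ℝ => (R0 ω s)^2)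
            = fun s : ℝ => 4*ω/(1 + Real.cosh (2*Real.sqrt ω*s)) from ?_]
        · exact Lam2_zero hω'
        · funext s
          rw [(hpt' s).1, ← hc00]
          norm_num
      have e4 : (∫ s : ℝ, (R0 ω s)^4) = 16*(Real.sqrt ω)^3/3 := by
        rw [show (fun s : ℝ => (R0 ω s)^4)
            = fun s : ℝ => (4*ω/(1 + Real.cosh (2*Real.sqrt ω*s)))^2 from ?_]
        · exact Lam4_zero hω'
        · funext s
          rw [(hpt' s).2, ← hc00]
          norm_num
      rw [hΛ24, e2, e4]
      have hb : 0 < Real.sqrt ω := Real.sqrt_pos.2 hω'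
      have hb2 : (Real.sqrt ω)^2 = ω := Real.sq_sqrt hω'.le
      field_simp
      linear_combination (-16) * hb2
    have hD : HasDerivAt (fun ω : ℝ => 3/(4*ω)) ((0*(4*ω₀) - 3*4)/(4*ω₀)^2) ω₀ := by
      exact (hasDerivAt_const ω₀ 3).div (by simpa using (hasDerivAt_id ω₀).const_mul 4)
        (by positivity)
    have hΛ : HasDerivAt Λ24 ((0*(4*ω₀) - 3*4)/(4*ω₀)^2) ω₀ :=
      hD.congr_of_eventuallyEq hEq
    refine ⟨hΛ.differentiableAt, ?_⟩
    rw [hΛ.deriv]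
    apply div_neg_of_neg_of_pos
    · linarith
    · positivity
  · -- c > 0 case
    have hmem : ω₀ ∈ Ioo (0:ℝ) c⁻¹ := by
      refine ⟨hω₀, ?_⟩
      rw [← one_div, lt_div_iff₀ hcpos]
      linarith [mul_comm c ω₀]
    have hEq : ∀ᶠ ω in 𝓝 ω₀, Λ24 ω
        = c * atnh (Real.sqrt (c*ω)) / (4*(atnh (Real.sqrt (c*ω)) - Real.sqrt (c*ω))) := by
      filter_upwards [isOpen_Ioo.mem_nhds hmem] with ω hω
      obtain ⟨hω1, hω2⟩ := hω
      have hcω : 0 < c*ω := mul_pos hcpos hω1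
      have hcω1 : c*ω < 1 := by
        rw [← one_div, lt_div_iff₀ hcpos] at hω2
        nlinarith
      set k := Real.sqrt (c*ω) with hkdef
      have hk : 0 < k := Real.sqrt_pos.2 hcω
      have hk2 : k^2 = c*ω := Real.sq_sqrt hcω.le
      have hk1 : k < 1 := by
        have : k < Real.sqrt 1 := Real.sqrt_lt_sqrt hcω.le hcω1
        simpa using this
      have hkk : (1:ℝ) - c*ω = 1 - k^2 := by rw [hk2]
      have e2 : (∫ s : ℝ, (R0 ω s)^2)
          = (2*Real.sqrt ω/k)*(Real.log (1+k) - Real.log (1-k)) := by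
        rw [show (fun s : ℝ => (R0 ω s)^2)
            = fun s : ℝ => 4*ω/(1 + Real.sqrt (1-k^2) * Real.cosh (2*Real.sqrt ω*s)) from ?_]
        · exact Lam2_eval hω1 hk hk1
        · funext s
          rw [(hpt ω hω1 hcω.le s).1, hkk]
      have e4 : (∫ s : ℝ, (R0 ω s)^4)
          = (16*(Real.sqrt ω)^3/k^3)*((Real.log (1+k) - Real.log (1-k))/2 - k) := by
        rw [show (fun s : ℝ => (R0 ω s)^4)
            = fun s : ℝ => (4*ω/(1 + Real.sqrt (1-k^2) * Real.cosh (2*Real.sqrt ω*s)))^2 from ?_]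
        · exact Lam4_eval hω1 hk hk1
        · funext s
          rw [(hpt ω hω1 hcω.le s).2, hkk]
      rw [hΛ24, e2, e4]
      have hb : 0 < Real.sqrt ω := Real.sqrt_pos.2 hω1
      have hb2 : (Real.sqrt ω)^2 = ω := Real.sq_sqrt hω1.le
      have hAk : k < atnh k := self_lt_atnh hk hk1
      have hAk' : (0:ℝ) < (Real.log (1+k) - Real.log (1-k))/2 - k := by
        have : atnh k = (Real.log (1+k) - Real.log (1-k))/2 := rfl
        linarith [this ▸ hAk]
      simp only [atnh]
      field_simp
      have hL2 : 0 < Real.log (1+k) - Real.log (1-k) - 2*k := by linarith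
      have hd1 : 0 < k * (16*(Real.sqrt ω)^3*(Real.log (1+k) - Real.log (1-k) - 2*k)) := by
        apply mul_pos hk
        apply mul_pos (by positivity)
        exact hL2
      have hd2 : (0:ℝ) < 4*(Real.log (1+k) - Real.log (1-k) - 2*k) := by linarith
      rw [div_left_inj' hL2.ne']
      linear_combination (16*(Real.log (1+k) - Real.log (1-k))) * hk2
        - (16*(Real.log (1+k) - Real.log (1-k))*c) * hb2
    -- derivative of the model function
    set k₀ := Real.sqrt (c*ω₀) with hk₀def
    have hcω₀ : 0 < c*ω₀ := mul_pos hcpos hω₀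
    have hk₀ : 0 < k₀ := Real.sqrt_pos.2 hcω₀
    have hk₀2 : k₀^2 = c*ω₀ := Real.sq_sqrt hcω₀.le
    have hk₀1 : k₀ < 1 := by
      have : k₀ < Real.sqrt 1 := Real.sqrt_lt_sqrt hcω₀.le (by linarith)
      simpa using this
    have hv : HasDerivAt (fun ω : ℝ => Real.sqrt (c*ω)) (1/(2*k₀)*c) ω₀ := by
      have h1 : HasDerivAt (fun ω : ℝ => c*ω) c ω₀ := by
        simpa using (hasDerivAt_id ω₀).const_mul c
      exact (Real.hasDerivAt_sqrt hcω₀.ne').comp ω₀ h1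
    have hu : HasDerivAt (fun ω : ℝ => atnh (Real.sqrt (c*ω))) (1/(1-k₀^2)*(1/(2*k₀)*c)) ω₀ :=
      by have h := (atnh_hasDerivAt (x := k₀) (by linarith) hk₀1).comp ω₀ hv; exact h
    have hAk₀ : k₀ < atnh k₀ := self_lt_atnh hk₀ hk₀1
    have hdenne : (4:ℝ)*(atnh k₀ - k₀) ≠ 0 := by
      have : (0:ℝ) < 4*(atnh k₀ - k₀) := by linarith
      exact this.ne'
    have hΦ := (hu.const_mul c).div ((hu.sub hv).const_mul 4) hdenne
    have hΛ := hΦ.congr_of_eventuallyEq hEq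
    refine ⟨hΛ.differentiableAt, ?_⟩
    rw [hΛ.deriv]
    simp only [Pi.sub_apply, ← hk₀def]
    apply div_neg_of_neg_of_pos
    · have key := atnh_lt_self_div hk₀ hk₀1
      have hkk₀ : (0:ℝ) < 1 - k₀^2 := by nlinarith
      have heq : c*(1/(1-k₀^2)*(1/(2*k₀)*c)) * (4*(atnh k₀ - k₀))
          - c*atnh k₀*(4*((1/(1-k₀^2)*(1/(2*k₀)*c)) - 1/(2*k₀)*c))
          = 4*c*(1/(2*k₀)*c)*(atnh k₀ - k₀/(1-k₀^2)) := by
        field_simp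
        ring
      rw [heq]
      apply mul_neg_of_pos_of_neg
      · positivity
      · rw [sub_neg]
        exact key
    · exact pow_pos (by linarith) 2

end MainThm
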